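/- Let P = {x ∈ ℝⁿ : Ax = b, Bx ≤ d}, let c ∈ ℝⁿ, and let x₀ ∈ P. Let y ∈ ℝⁿ be a steepest-descent augmenting direction at x₀, i.e., y is strictly feasible at x₀, By ≠ 0, and cᵀy/‖By‖₁ ≤ cᵀz/‖Bz‖₁ for every z strictly feasible at x₀ with Bz ≠ 0; assume moreover cᵀy < 0. Suppose y = Σ_{j=1}^t λ_j g_j with λ_j > 0, Ag_j = 0, Bg_j ≠ 0, and each g_j conformal to y with respect to B. Then cᵀg_j/‖Bg_j‖₁ = cᵀy/‖By‖₁ for every j ∈ {1, …, t}. -/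
import Mathlib


open Finset Matrix

/-- `y` is strictly feasible at `x₀` with respect to the set `P`. -/
def StrictlyFeasible {n : ℕ} (P : Set (Fin n → ℝ)) (x₀ y : Fin n → ℝ) : Prop :=
  ∃ α : ℝ, 0 < α ∧ x₀ + α • y ∈ P

/-- If `y` is a steepest-descent augmenting direction at `x₀` with `cᵀy < 0`
and `y = ∑ⱼ λⱼ gⱼ` is a conformal decomposition with `λⱼ > 0`, `A gⱼ = 0`, `B gⱼ ≠ 0`,
then every `gⱼ` has the same steepness as `y`. -/
theorem conformal_circuits_same_steepness
    (n mA mB : ℕ) (A : Matrix (Fin mA) (Fin n) ℝ) (B : Matrix (Fin mB) (Fin n) ℝ)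
    (b : Fin mA → ℝ) (d : Fin mB → ℝ) (c : Fin n → ℝ)
    (P : Set (Fin n → ℝ))
    (hP : P = {x | A.mulVec x = b ∧ ∀ i, B.mulVec x i ≤ d i})
    (x₀ : Fin n → ℝ) (hx₀ : x₀ ∈ P)
    (y : Fin n → ℝ)
    (hyfeas : StrictlyFeasible P x₀ y)
    (hBy : B.mulVec y ≠ 0)
    (hsteepest : ∀ z : Fin n → ℝ, StrictlyFeasible P x₀ z → B.mulVec z ≠ 0 →
      c ⬝ᵥ y / (∑ i, |B.mulVec y i|) ≤ c ⬝ᵥ z / (∑ i, |B.mulVec z i|))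
    (hcy : c ⬝ᵥ y < 0)
    (t : ℕ) (g : Fin t → (Fin n → ℝ)) (lam : Fin t → ℝ)
    (hlam : ∀ j, 0 < lam j)
    (hy : y = ∑ j, lam j • g j)
    (hAg : ∀ j, A.mulVec (g j) = 0)
    (hBg : ∀ j, B.mulVec (g j) ≠ 0)
    (hconf : ∀ j, ∀ i, B.mulVec (g j) i * B.mulVec y i ≥ 0 ∧
      (B.mulVec y i = 0 → B.mulVec (g j) i = 0)) :
    ∀ j, c ⬝ᵥ (g j) / (∑ i, |B.mulVec (g j) i|) = c ⬝ᵥ y / (∑ i, |B.mulVec y i|) := by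
  -- basic facts
  obtain ⟨i0, hi0⟩ : ∃ i, B.mulVec y i ≠ 0 := Function.ne_iff.mp hBy
  -- linearity of B.mulVec over the decomposition
  have hBlin : ∀ i, B.mulVec y i = ∑ k, lam k * B.mulVec (g k) i := by
    intro i
    have : B.mulVec y = ∑ k, lam k • B.mulVec (g k) := by
      rw [hy, ← Matrix.mulVecLin_apply, map_sum]
      simp [Matrix.mulVecLin_apply]
    rw [this]
    simp [Finset.sum_apply]
  have hclin : c ⬝ᵥ y = ∑ k, lam k * (c ⬝ᵥ g k) := by
    rw [hy]
    simp [dotProduct, Finset.mul_sum, Finset.sum_apply]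
    rw [Finset.sum_comm]
    congr 1; ext k; congr 1; ext i; ring
  -- pointwise absolute value identity
  have habs : ∀ i, |B.mulVec y i| = ∑ k, lam k * |B.mulVec (g k) i| := by
    intro i
    rcases lt_trichotomy (B.mulVec y i) 0 with hneg | hzero | hpos
    · have hle : ∀ k, B.mulVec (g k) i ≤ 0 := by
        intro k
        by_contra h
        push_neg at h
        have := (hconf k i).1
        nlinarith
      rw [abs_of_neg hneg, hBlin i, ← Finset.sum_neg_distrib]
      refine Finset.sum_congr rfl fun k _ => ?_
      rw [abs_of_nonpos (hle k)]; ring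
    · have : ∀ k, B.mulVec (g k) i = 0 := fun k => (hconf k i).2 hzero
      simp [hzero, this]
    · have hle : ∀ k, 0 ≤ B.mulVec (g k) i := by
        intro k
        by_contra h
        push_neg at h
        have := (hconf k i).1
        nlinarith
      rw [abs_of_pos hpos, hBlin i]
      refine Finset.sum_congr rfl fun k _ => ?_
      rw [abs_of_nonneg (hle k)]
  -- norms
  have hNy : (0:ℝ) < ∑ i, |B.mulVec y i| := by
    apply Finset.sum_pos' (fun i _ => abs_nonneg _)
    exact ⟨i0, Finset.mem_univ _, abs_pos.mpr hi0⟩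
  have hNg : ∀ k, (0:ℝ) < ∑ i, |B.mulVec (g k) i| := by
    intro k
    obtain ⟨i1, hi1⟩ : ∃ i, B.mulVec (g k) i ≠ 0 := Function.ne_iff.mp (hBg k)
    apply Finset.sum_pos' (fun i _ => abs_nonneg _)
    exact ⟨i1, Finset.mem_univ _, abs_pos.mpr hi1⟩
  have hNsum : ∑ i, |B.mulVec y i| = ∑ k, lam k * ∑ i, |B.mulVec (g k) i| := by
    calc ∑ i, |B.mulVec y i| = ∑ i, ∑ k, lam k * |B.mulVec (g k) i| := by
          exact Finset.sum_congr rfl fun i _ => habs i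
      _ = ∑ k, ∑ i, lam k * |B.mulVec (g k) i| := Finset.sum_comm
      _ = ∑ k, lam k * ∑ i, |B.mulVec (g k) i| := by
          exact Finset.sum_congr rfl fun k _ => (Finset.mul_sum _ _ _).symm
  -- strict feasibility of each g k
  have hfeas : ∀ k, StrictlyFeasible P x₀ (g k) := by
    intro k
    obtain ⟨α, hα, hmem⟩ := hyfeas
    rw [hP] at hmem hx₀
    obtain ⟨hA0, hB0⟩ := hx₀
    obtain ⟨_, hBα⟩ := hmem
    have hslack : ∀ i, B.mulVec x₀ i + α * B.mulVec y i ≤ d i := by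
      intro i
      have := hBα i
      rwa [Matrix.mulVec_add, Matrix.mulVec_smul, Pi.add_apply, Pi.smul_apply,
        smul_eq_mul] at this
    have hne : (Finset.univ : Finset (Fin mB)).Nonempty := ⟨i0, Finset.mem_univ _⟩
    set f : Fin mB → ℝ := fun i =>
      if 0 < B.mulVec (g k) i then (d i - B.mulVec x₀ i) / B.mulVec (g k) i else 1 with hf
    set ε := Finset.univ.inf' hne f with hε
    have hfpos : ∀ i, 0 < f i := by
      intro i
      by_cases h : 0 < B.mulVec (g k) i
      · have hyi : 0 < B.mulVec y i := by
          rcases lt_trichotomy (B.mulVec y i) 0 with h1 | h1 | h1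
          · exfalso; have := (hconf k i).1; nlinarith
          · exfalso; have := (hconf k i).2 h1; linarith
          · exact h1
        have : 0 < d i - B.mulVec x₀ i := by
          have := hslack i; nlinarith
        simp only [hf, if_pos h]
        positivity
      · simp only [hf, if_neg h]; norm_num
    have hεpos : 0 < ε := by
      rw [hε]
      apply Finset.lt_inf'_iff hne |>.mpr
      exact fun i _ => hfpos i
    refine ⟨ε, hεpos, ?_⟩
    rw [hP]
    constructor
    · rw [Matrix.mulVec_add, Matrix.mulVec_smul, hAg k, hA0]
      simp
    · intro i
      rw [Matrix.mulVec_add, Matrix.mulVec_smul, Pi.add_apply, Pi.smul_apply, smul_eq_mul]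
      by_cases h : 0 < B.mulVec (g k) i
      · have hεle : ε ≤ f i := Finset.inf'_le _ (Finset.mem_univ i)
        rw [hf] at hεle
        simp only [if_pos h] at hεle
        have : ε * B.mulVec (g k) i ≤ d i - B.mulVec x₀ i := by
          rw [← le_div_iff₀ h]; exact hεle
        linarith
      · push_neg at h
        have : ε * B.mulVec (g k) i ≤ 0 := mul_nonpos_of_nonneg_of_nonpos hεpos.le h
        have := hB0 i
        linarith [hB0 i, mul_nonpos_of_nonneg_of_nonpos hεpos.le h]
  -- steepness inequality for each g k
  set s := c ⬝ᵥ y / ∑ i, |B.mulVec y i| with hs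
  have hkey : ∀ k, s * (∑ i, |B.mulVec (g k) i|) ≤ c ⬝ᵥ g k := by
    intro k
    have := hsteepest (g k) (hfeas k) (hBg k)
    calc s * (∑ i, |B.mulVec (g k) i|)
        ≤ (c ⬝ᵥ g k / ∑ i, |B.mulVec (g k) i|) * (∑ i, |B.mulVec (g k) i|) := by
          apply mul_le_mul_of_nonneg_right this (hNg k).le
      _ = c ⬝ᵥ g k := div_mul_cancel₀ _ (hNg k).ne'
  -- sum of slacks is zero
  have hsumzero : ∑ k, lam k * (c ⬝ᵥ g k - s * ∑ i, |B.mulVec (g k) i|) = 0 := by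
    have h1 : ∑ k, lam k * (c ⬝ᵥ g k - s * ∑ i, |B.mulVec (g k) i|)
        = (∑ k, lam k * (c ⬝ᵥ g k)) - s * ∑ k, lam k * ∑ i, |B.mulVec (g k) i| := by
      rw [Finset.mul_sum, ← Finset.sum_sub_distrib]
      exact Finset.sum_congr rfl fun k _ => by ring
    rw [h1, ← hclin, ← hNsum]
    have : s * ∑ i, |B.mulVec y i| = c ⬝ᵥ y := div_mul_cancel₀ _ hNy.ne'
    linarith
  have heach : ∀ k ∈ Finset.univ,
      lam k * (c ⬝ᵥ g k - s * ∑ i, |B.mulVec (g k) i|) = 0 := by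
    rw [← Finset.sum_eq_zero_iff_of_nonneg]
    · exact hsumzero
    · intro k _
      have := hkey k
      have := hlam k
      nlinarith
  intro j
  have hj := heach j (Finset.mem_univ j)
  have hlj := (hlam j).ne'
  have : c ⬝ᵥ g j = s * ∑ i, |B.mulVec (g j) i| := by
    rcases mul_eq_zero.mp hj with h | h
    · exact absurd h hlj
    · linarith
  rw [hs] at this ⊢
  rw [this, mul_div_assoc, div_self (hNg j).ne', mul_one]
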